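/- arXiv:math/0601482 — 2 statements merged into one kernel-verified Lean document; each statement's English description precedes it below -/
import Mathlib

section
/- Let (W,S) be a Coxeter system with geometric representation and set of positive roots Φ⁺. If β₁, β₂, β₃ ∈ Φ⁺ satisfy (βᵢ, βⱼ) ≤ -1 for all i ≠ j, then the reflection subgroup ⟨s_{β₁}, s_{β₂}, s_{β₃}⟩ of W is isomorphic to the universal Coxeter group W_(3) = Z/2 * Z/2 * Z/2. -/
set_option linter.unusedSectionVars false
set_option maxHeartbeats 1000000





section GeometricRepresentation

variable {B : Type*} [Fintype B] [DecidableEq B]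

/-- The matrix of the canonical bilinear form of the geometric representation of a
Coxeter group: `k s t = -cos (π / m s t)`, where an entry `m s t = 0` of the Coxeter
matrix stands for `∞` (so `k s t = -1` in that case).  In particular `k s s = 1`. -/
noncomputable def cosMatrix (M : CoxeterMatrix B) : Matrix B B ℝ :=
  Matrix.of fun a b => if M a b = 0 then -1 else -Real.cos (Real.pi / (M a b : ℝ))

/-- The canonical invariant symmetric bilinear form on the geometric representation
`V = B → ℝ` of a Coxeter group, with the simple roots `α_s = Pi.single s 1` as an
orthonormal-with-respect-to-`cosMatrix` basis:  `(v, w) = ∑ a b, v a * w b * k a b`. -/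
noncomputable def bform (M : CoxeterMatrix B) (v w : B → ℝ) : ℝ :=
  ∑ a, ∑ b, v a * w b * cosMatrix M a b

variable {W : Type*} [Group W] {M : CoxeterMatrix B}

/-- `IsGeometricRep cs ρ` asserts that the homomorphism `ρ` from `W` to the linear
automorphisms of `V = B → ℝ` is the geometric representation of the Coxeter system
`cs`: each simple reflection acts by `v ↦ v - 2 (v, α_s) α_s`. -/
def IsGeometricRep (cs : CoxeterSystem M W) (ρ : W →* ((B → ℝ) ≃ₗ[ℝ] (B → ℝ))) : Prop :=
  ∀ (i : B) (v : B → ℝ),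
    ρ (cs.simple i) v = v - (2 * bform M v (Pi.single i 1)) • (Pi.single i 1 : B → ℝ)

/-- `β` is a root of the Coxeter system: an element of the orbit `W · {α_s}`. -/
def IsRoot (cs : CoxeterSystem M W) (ρ : W →* ((B → ℝ) ≃ₗ[ℝ] (B → ℝ)))
    (β : B → ℝ) : Prop :=
  ∃ (w : W) (i : B), β = ρ w (Pi.single i 1)

/-- `β` is a positive root: a root all of whose coordinates in the basis of simple
roots are nonnegative. -/
def IsPositiveRoot (cs : CoxeterSystem M W) (ρ : W →* ((B → ℝ) ≃ₗ[ℝ] (B → ℝ)))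
    (β : B → ℝ) : Prop :=
  IsRoot cs ρ β ∧ ∀ a, 0 ≤ β a

/-- `t` is the reflection `s_β` of `W` corresponding to the root `β`:
if `β = w · α_i` then `s_β = w s_i w⁻¹`. -/
def IsReflectionWithRoot (cs : CoxeterSystem M W) (ρ : W →* ((B → ℝ) ≃ₗ[ℝ] (B → ℝ)))
    (t : W) (β : B → ℝ) : Prop :=
  ∃ (w : W) (i : B), t = w * cs.simple i * w⁻¹ ∧ β = ρ w (Pi.single i 1)

end GeometricRepresentation

section MyAux

variable {B : Type*} [Fintype B] [DecidableEq B] {M : CoxeterMatrix B}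

lemma cosMatrix_symm (M : CoxeterMatrix B) (a b : B) : cosMatrix M a b = cosMatrix M b a := by
  simp [cosMatrix, M.symmetric a b]

lemma cosMatrix_diag (M : CoxeterMatrix B) (a : B) : cosMatrix M a a = 1 := by
  simp [cosMatrix, M.diagonal a]

lemma bform_symm (M : CoxeterMatrix B) (v w : B → ℝ) : bform M v w = bform M w v := by
  unfold bform
  rw [Finset.sum_comm]
  exact Finset.sum_congr rfl fun a _ => Finset.sum_congr rfl fun b _ => by
    rw [cosMatrix_symm]; ring

noncomputable def bformL (M : CoxeterMatrix B) : (B → ℝ) →ₗ[ℝ] (B → ℝ) →ₗ[ℝ] ℝ :=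
  LinearMap.mk₂ ℝ (bform M)
    (fun v v' w => by
      unfold bform
      rw [← Finset.sum_add_distrib]
      exact Finset.sum_congr rfl fun a _ => by
        rw [← Finset.sum_add_distrib]
        exact Finset.sum_congr rfl fun b _ => by simp [add_mul])
    (fun c v w => by
      unfold bform
      simp only [smul_eq_mul, Pi.smul_apply]
      rw [Finset.mul_sum]
      exact Finset.sum_congr rfl fun a _ => by
        rw [Finset.mul_sum]
        exact Finset.sum_congr rfl fun b _ => by ring)
    (fun v w w' => by
      unfold bform
      rw [← Finset.sum_add_distrib]
      exact Finset.sum_congr rfl fun a _ => by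
        rw [← Finset.sum_add_distrib]
        exact Finset.sum_congr rfl fun b _ => by simp [add_mul, mul_add])
    (fun c v w => by
      unfold bform
      simp only [smul_eq_mul, Pi.smul_apply]
      rw [Finset.mul_sum]
      exact Finset.sum_congr rfl fun a _ => by
        rw [Finset.mul_sum]
        exact Finset.sum_congr rfl fun b _ => by ring)

lemma bformL_apply (M : CoxeterMatrix B) (v w : B → ℝ) : bformL M v w = bform M v w := rfl

lemma bform_single_single (M : CoxeterMatrix B) (i : B) :
    bform M (Pi.single i 1 : B → ℝ) (Pi.single i 1) = 1 := by
  unfold bform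
  simp [Pi.single_apply, ite_mul, cosMatrix_diag]

variable {W : Type*} [Group W]

lemma rho_mul_apply (ρ : W →* ((B → ℝ) ≃ₗ[ℝ] (B → ℝ))) (a b : W) (v : B → ℝ) :
    ρ (a * b) v = ρ a (ρ b v) := by
  rw [map_mul]; rfl

lemma rho_inv_cancel (ρ : W →* ((B → ℝ) ≃ₗ[ℝ] (B → ℝ))) (a : W) (v : B → ℝ) :
    ρ a (ρ a⁻¹ v) = v := by
  rw [← rho_mul_apply, mul_inv_cancel, map_one]; rfl

lemma bform_expand (M : CoxeterMatrix B) (x y α : B → ℝ) (r s : ℝ) :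
    bform M (x - r • α) (y - s • α) =
      bform M x y - s * bform M x α - r * bform M α y + r * s * bform M α α := by
  simp only [← bformL_apply, map_sub, map_smul, LinearMap.sub_apply, LinearMap.smul_apply,
    smul_eq_mul]
  ring

lemma bform_simple_invariant (cs : CoxeterSystem M W) (ρ : W →* ((B → ℝ) ≃ₗ[ℝ] (B → ℝ)))
    (hρ : IsGeometricRep cs ρ) (i : B) (v u : B → ℝ) :
    bform M (ρ (cs.simple i) v) (ρ (cs.simple i) u) = bform M v u := by
  rw [hρ i v, hρ i u, bform_expand, bform_single_single,
    bform_symm M (Pi.single i 1) u]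
  ring

lemma bform_invariant (cs : CoxeterSystem M W) (ρ : W →* ((B → ℝ) ≃ₗ[ℝ] (B → ℝ)))
    (hρ : IsGeometricRep cs ρ) (w : W) (v u : B → ℝ) :
    bform M (ρ w v) (ρ w u) = bform M v u := by
  have hw : w ∈ Subgroup.closure (Set.range cs.simple) := by
    rw [cs.subgroup_closure_range_simple]; trivial
  induction hw using Subgroup.closure_induction generalizing v u with
  | mem x hx =>
    obtain ⟨i, rfl⟩ := hx
    exact bform_simple_invariant cs ρ hρ i v u
  | one => simp only [map_one]; rfl
  | mul x y hx hy ihx ihy =>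
    rw [rho_mul_apply, rho_mul_apply, ihx, ihy]
  | inv x hx ihx =>
    have := ihx (ρ x⁻¹ v) (ρ x⁻¹ u)
    rw [rho_inv_cancel, rho_inv_cancel] at this
    exact this.symm

lemma refl_apply (cs : CoxeterSystem M W) (ρ : W →* ((B → ℝ) ≃ₗ[ℝ] (B → ℝ)))
    (hρ : IsGeometricRep cs ρ) {t : W} {β : B → ℝ}
    (h : IsReflectionWithRoot cs ρ t β) (v : B → ℝ) :
    ρ t v = v - (2 * bform M v β) • β := by
  obtain ⟨w, i, rfl, rfl⟩ := h
  rw [rho_mul_apply, rho_mul_apply, hρ i (ρ w⁻¹ v), map_sub, map_smul, rho_inv_cancel]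
  congr 2
  rw [← bform_invariant cs ρ hρ w (ρ w⁻¹ v) (Pi.single i 1), rho_inv_cancel]

lemma bform_root_self (cs : CoxeterSystem M W) (ρ : W →* ((B → ℝ) ≃ₗ[ℝ] (B → ℝ)))
    (hρ : IsGeometricRep cs ρ) {β : B → ℝ} (h : IsRoot cs ρ β) :
    bform M β β = 1 := by
  obtain ⟨w, i, rfl⟩ := h
  rw [bform_invariant cs ρ hρ, bform_single_single]

lemma root_ne_zero (cs : CoxeterSystem M W) (ρ : W →* ((B → ℝ) ≃ₗ[ℝ] (B → ℝ)))
    {β : B → ℝ} (h : IsRoot cs ρ β) : β ≠ 0 := by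
  obtain ⟨w, i, rfl⟩ := h
  intro hz
  have h1 : (Pi.single i 1 : B → ℝ) = 0 := (ρ w).map_eq_zero_iff.mp hz
  have := congrFun h1 i
  simp at this

lemma refl_sq (cs : CoxeterSystem M W) (ρ : W →* ((B → ℝ) ≃ₗ[ℝ] (B → ℝ)))
    {t : W} {β : B → ℝ} (h : IsReflectionWithRoot cs ρ t β) : t * t = 1 := by
  obtain ⟨w, i, rfl, -⟩ := h
  have : w * cs.simple i * w⁻¹ * (w * cs.simple i * w⁻¹)
      = w * (cs.simple i * cs.simple i) * w⁻¹ := by group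
  rw [this, cs.simple_mul_simple_self, mul_one, mul_inv_cancel]

end MyAux

section MyKey

variable {B : Type*} [Fintype B] [DecidableEq B] {M : CoxeterMatrix B}
variable {W : Type*} [Group W]

lemma key_lemma (cs : CoxeterSystem M W) (ρ : W →* ((B → ℝ) ≃ₗ[ℝ] (B → ℝ)))
    (hρ : IsGeometricRep cs ρ)
    (β : Fin 3 → (B → ℝ)) (t : Fin 3 → W)
    (hβ : ∀ i, IsPositiveRoot cs ρ (β i))
    (ht : ∀ i, IsReflectionWithRoot cs ρ (t i) (β i))
    (hform : ∀ i j, i ≠ j → bform M (β i) (β j) ≤ -1) :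
    ∀ (ℓ : List (Fin 3)) (h : Fin 3), List.Chain Ne h ℓ →
      ∃ c : Fin 3 → ℝ, (∀ j, 0 ≤ c j) ∧ 1 ≤ c h ∧ (∀ j, c j ≤ c h) ∧
        ρ (((h :: ℓ).map t).prod) (β (ℓ.getLastD h)) = -(∑ j, c j • β j) := by
  intro ℓ
  induction ℓ with
  | nil =>
    intro h _
    refine ⟨fun j => if j = h then 1 else 0, ?_, ?_, ?_, ?_⟩
    · intro j; dsimp only; split <;> norm_num
    · simp
    · intro j; dsimp only; split <;> norm_num
    · have hsum : (∑ j, (if j = h then (1:ℝ) else 0) • β j) = β h := by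
        have step : ∀ j : Fin 3, (if j = h then (1:ℝ) else 0) • β j
            = if j = h then β h else 0 := by
          intro j; by_cases hj : j = h <;> simp [hj]
        rw [Finset.sum_congr rfl (fun j _ => step j), Finset.sum_ite_eq' Finset.univ h]
        simp
      rw [hsum]
      simp only [List.map_cons, List.map_nil, List.prod_cons, List.prod_nil, mul_one,
        List.getLastD_nil]
      rw [refl_apply cs ρ hρ (ht h), bform_root_self cs ρ hρ (hβ h).1]
      module
  | cons i ℓ' ih =>
    intro h hchain
    replace hchain := List.isChain_cons_cons.mp hchain
    obtain ⟨hne, hchain'⟩ := hchain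
    obtain ⟨c, hc0, hc1, hcmax, hv⟩ := ih i hchain'
    set S : ℝ := ∑ l, c l * bform M (β l) (β h) with hS
    -- bound S
    have hSbound : S ≤ c h - c i := by
      have hsplit : S = (∑ l ∈ Finset.univ.erase h, c l * bform M (β l) (β h))
          + c h * bform M (β h) (β h) := by
        rw [hS, ← Finset.sum_erase_add Finset.univ _ (Finset.mem_univ h)]
      have hb1 : (∑ l ∈ Finset.univ.erase h, c l * bform M (β l) (β h))
          ≤ ∑ l ∈ Finset.univ.erase h, (-(c l)) := by
        refine Finset.sum_le_sum fun l hl => ?_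
        have hlh : l ≠ h := Finset.ne_of_mem_erase hl
        have := hform l h hlh
        nlinarith [hc0 l]
      have hb2 : c i ≤ ∑ l ∈ Finset.univ.erase h, c l := by
        refine Finset.single_le_sum (fun l _ => hc0 l) ?_
        exact Finset.mem_erase.mpr ⟨fun e => hne e.symm, Finset.mem_univ i⟩
      rw [Finset.sum_neg_distrib] at hb1
      rw [hsplit, bform_root_self cs ρ hρ (hβ h).1]
      linarith
    have hci1 : 1 ≤ c i := hc1
    have hchle : c h ≤ c i := hcmax h
    have hch' : c i ≤ c h - 2 * S := by linarith
    refine ⟨fun j => if j = h then c h - 2 * S else c j, ?_, ?_, ?_, ?_⟩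
    · intro j
      dsimp only
      by_cases hj : j = h
      · rw [if_pos hj]; linarith
      · rw [if_neg hj]; exact hc0 j
    · dsimp only; rw [if_pos rfl]; linarith
    · intro j
      dsimp only
      rw [if_pos rfl]
      by_cases hj : j = h
      · rw [if_pos hj]
      · rw [if_neg hj]
        have := hcmax j
        linarith
    · have hlast : ((i :: ℓ').getLastD h) = ℓ'.getLastD i := List.getLastD_cons (a := h) (b := i) (l := ℓ')
      rw [hlast]
      have hprod : (((h :: i :: ℓ').map t).prod) = t h * (((i :: ℓ').map t).prod) := by
        simp [List.map_cons, List.prod_cons]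
      rw [hprod, rho_mul_apply, hv, refl_apply cs ρ hρ (ht h)]
      have hbneg : bform M (-(∑ j, c j • β j)) (β h) = -S := by
        rw [hS, ← bformL_apply]
        simp only [map_neg, map_sum, map_smul, LinearMap.neg_apply, LinearMap.sum_apply,
          LinearMap.smul_apply, smul_eq_mul, bformL_apply]
      rw [hbneg]
      have hsum' : (∑ j, (if j = h then c h - 2 * S else c j) • β j)
          = (∑ j, c j • β j) - (2 * S) • β h := by
        have step : ∀ j : Fin 3, (if j = h then c h - 2 * S else c j) • β j
            = c j • β j + (if j = h then (-(2 * S)) • β h else 0) := by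
          intro j
          by_cases hj : j = h
          · subst hj; rw [if_pos rfl, if_pos rfl]; module
          · rw [if_neg hj, if_neg hj, add_zero]
        rw [Finset.sum_congr rfl (fun j _ => step j), Finset.sum_add_distrib,
          Finset.sum_ite_eq' Finset.univ h]
        rw [if_pos (Finset.mem_univ h)]
        module
      rw [hsum']
      module

end MyKey

lemma chain_or_split {α : Type*} [DecidableEq α] :
    ∀ ω : List α, List.Chain' Ne ω ∨ ∃ a i b, ω = a ++ i :: i :: b := by
  intro ω
  induction ω with
  | nil => exact Or.inl List.isChain_nil
  | cons x rest ih =>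
    cases rest with
    | nil => exact Or.inl (List.isChain_singleton x)
    | cons y l =>
      by_cases hxy : x = y
      · exact Or.inr ⟨[], x, l, by subst hxy; rfl⟩
      · rcases ih with hc | ⟨a, i, b, heq⟩
        · exact Or.inl (List.isChain_cons_cons.mpr ⟨hxy, hc⟩)
        · exact Or.inr ⟨x :: a, i, b, by rw [heq]; rfl⟩




/-- The Coxeter matrix of the universal Coxeter group `W₍₃₎` on three generators. -/
def M3 : CoxeterMatrix (Fin 3) where
  M := Matrix.of fun i j => if i = j then 1 else 0
  isSymm := by decide
  diagonal := by decide
  off_diagonal := by intro i i' h; simp [Matrix.of_apply, h]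

/-- If `β₁, β₂, β₃` are positive roots of a Coxeter system with `(β_i, β_j) ≤ -1` for
all `i ≠ j`, then the reflection subgroup `⟨s_{β₁}, s_{β₂}, s_{β₃}⟩` is isomorphic to
the universal Coxeter group `W₍₃₎ = ℤ/2 * ℤ/2 * ℤ/2`. -/
theorem reflection_subgroup_isomorphic_to_W3
    {B W : Type*} [Fintype B] [DecidableEq B] [Group W] {M : CoxeterMatrix B}
    (cs : CoxeterSystem M W) (ρ : W →* ((B → ℝ) ≃ₗ[ℝ] (B → ℝ)))
    (hρ : IsGeometricRep cs ρ)
    (β : Fin 3 → (B → ℝ)) (t : Fin 3 → W)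
    (hβ : ∀ i, IsPositiveRoot cs ρ (β i))
    (ht : ∀ i, IsReflectionWithRoot cs ρ (t i) (β i))
    (hform : ∀ i j, i ≠ j → bform M (β i) (β j) ≤ -1) :
    Nonempty ((Subgroup.closure {t 0, t 1, t 2} : Subgroup W) ≃* M3.Group) := by
  classical
  have ht2 : ∀ i, t i * t i = 1 := fun i => refl_sq cs ρ (ht i)
  have hlift : CoxeterMatrix.IsLiftable M3 t := by
    intro i j
    by_cases hij : i = j
    · subst hij
      have h1 : M3 i i = 1 := M3.diagonal i
      rw [h1, pow_one, ht2]
    · have h0 : M3 i j = 0 := by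
        show (if i = j then 1 else 0) = 0
        rw [if_neg hij]
      rw [h0, pow_zero]
  set cs3 := M3.toCoxeterSystem with hcs3
  set φ : M3.Group →* W := cs3.lift ⟨t, hlift⟩ with hφ
  have hφs : ∀ i, φ (cs3.simple i) = t i := fun i => cs3.lift_apply_simple hlift i
  -- the range of φ
  have hrangeset : Set.range cs3.simple = {cs3.simple 0, cs3.simple 1, cs3.simple 2} := by
    ext x
    constructor
    · rintro ⟨i, rfl⟩
      fin_cases i
      · exact Or.inl rfl
      · exact Or.inr (Or.inl rfl)
      · exact Or.inr (Or.inr rfl)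
    · rintro (rfl | rfl | rfl)
      exacts [⟨0, rfl⟩, ⟨1, rfl⟩, ⟨2, rfl⟩]
  have hrange : φ.range = Subgroup.closure {t 0, t 1, t 2} := by
    rw [MonoidHom.range_eq_map, ← cs3.subgroup_closure_range_simple, MonoidHom.map_closure,
      hrangeset]
    congr 1
    simp only [Set.image_insert_eq, Set.image_singleton, hφs]
  -- φ maps word products to products of the t i
  have hφword : ∀ ω : List (Fin 3), φ (cs3.wordProd ω) = (ω.map t).prod := by
    intro ω
    rw [CoxeterSystem.wordProd, map_list_prod, List.map_map]
    congr 1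
    exact List.map_congr_left fun i _ => hφs i
  -- nontriviality of products over chains
  have hchainprod : ∀ (h : Fin 3) (ℓ : List (Fin 3)), List.Chain Ne h ℓ →
      (((h :: ℓ).map t).prod) ≠ 1 := by
    intro h ℓ hchain hone
    obtain ⟨c, hc0, hc1, hcmax, hv⟩ := key_lemma cs ρ hρ β t hβ ht hform ℓ h hchain
    rw [hone, map_one] at hv
    have hv' : β (ℓ.getLastD h) = -(∑ j, c j • β j) := hv
    have hzero : β (ℓ.getLastD h) + (∑ j, c j • β j) = 0 := by
      rw [hv']; abel
    have hβh : β h = 0 := by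
      funext a
      have ha := congrFun hzero a
      simp only [Pi.add_apply, Finset.sum_apply, Pi.smul_apply, smul_eq_mul, Pi.zero_apply] at ha
      have h1 : 0 ≤ β (ℓ.getLastD h) a := (hβ _).2 a
      have h2 : ∀ j : Fin 3, 0 ≤ c j * β j a := fun j => mul_nonneg (hc0 j) ((hβ j).2 a)
      have hsum0 : (∑ j, c j * β j a) = 0 := by
        have := Finset.sum_nonneg (fun j (_ : j ∈ Finset.univ) => h2 j)
        linarith
      have := (Finset.sum_eq_zero_iff_of_nonneg
        (fun j (_ : j ∈ Finset.univ) => h2 j)).mp hsum0 h (Finset.mem_univ h)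
      have hch : (0:ℝ) < c h := lt_of_lt_of_le zero_lt_one hc1
      have : β h a = 0 := by
        rcases mul_eq_zero.mp this with h' | h'
        · exact absurd h' (ne_of_gt hch)
        · exact h'
      simpa using this
    exact root_ne_zero cs ρ (hβ h).1 hβh
  -- injectivity of φ
  have hker : ∀ n (ω : List (Fin 3)), ω.length ≤ n → φ (cs3.wordProd ω) = 1 →
      cs3.wordProd ω = 1 := by
    intro n
    induction n with
    | zero =>
      intro ω hlen _
      rw [List.length_eq_zero_iff.mp (Nat.le_zero.mp hlen)]
      exact cs3.wordProd_nil
    | succ n ihn =>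
      intro ω hlen hone
      rcases chain_or_split ω with hc | ⟨a, i, b, rfl⟩
      · cases ω with
        | nil => exact cs3.wordProd_nil
        | cons h ℓ =>
          exfalso
          apply hchainprod h ℓ hc
          rw [← hφword]
          exact hone
      · have heq : cs3.wordProd (a ++ i :: i :: b) = cs3.wordProd (a ++ b) := by
          have hcancel : cs3.simple i * (cs3.simple i * cs3.wordProd b) = cs3.wordProd b := by
            rw [← mul_assoc, cs3.simple_mul_simple_self, one_mul]
          rw [cs3.wordProd_append, cs3.wordProd_append, cs3.wordProd_cons, cs3.wordProd_cons,
            hcancel]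
        rw [heq] at hone ⊢
        apply ihn _ _ hone
        simp only [List.length_append, List.length_cons] at hlen ⊢
        omega
  have hinj : Function.Injective φ := by
    rw [injective_iff_map_eq_one]
    intro x hx
    obtain ⟨ω, rfl⟩ := cs3.wordProd_surjective x
    exact hker ω.length ω le_rfl hx
  exact ⟨(MulEquiv.subgroupCongr hrange.symm).trans (MonoidHom.ofInjective hinj).symm⟩
end

section
/- In the universal Coxeter group W_(3) with a geometric representation determined by a bilinear form with (αᵢ,αᵢ)=1 and (αᵢ,αⱼ) ≤ -1 integers for i ≠ j: if α = c₁α₁ + c₂α₂ + c₃α₃ is a positive root whose reflection s_α is conjugate to s₁, then c₁ > 0. -/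
/-- The universal Coxeter group `W₍₃₎ = ℤ/2 * ℤ/2 * ℤ/2`. -/
abbrev W3 : Type := M3.Group

/-- The canonical Coxeter system on `W₍₃₎`. -/
def cs3 : CoxeterSystem M3 W3 := M3.toCoxeterSystem

/-- The bilinear form on `V = Fin 3 → ℝ` with matrix `k` in the basis of simple roots
`α_i = Pi.single i 1`. -/
def bform3 (k : Matrix (Fin 3) (Fin 3) ℝ) (v w : Fin 3 → ℝ) : ℝ :=
  ∑ a, ∑ b, v a * w b * k a b

/-- The sign character of `W3` that is `-1` exactly on words with an odd number of `s₀`. -/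
noncomputable def sgn0 : W3 →* ℤˣ :=
  cs3.lift ⟨fun i => if i = 0 then (-1 : ℤˣ) else 1, by
    intro i i'
    show (_ * _) ^ (if i = i' then 1 else 0) = 1
    rcases eq_or_ne i i' with rfl | h
    · simp only [if_pos rfl, pow_one]
      rcases eq_or_ne i 0 with rfl | h0
      · simp
      · simp [h0]
    · simp [h]⟩

lemma sgn0_simple (i : Fin 3) : sgn0 (cs3.simple i) = if i = 0 then (-1 : ℤˣ) else 1 := by
  simpa [sgn0] using cs3.lift_apply_simple _ i

/-- The bilinear form of an integral vector with a simple root is an integer. -/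
lemma bform3_int (k : Matrix (Fin 3) (Fin 3) ℝ)
    (hdiag : ∀ i, k i i = 1)
    (hint : ∀ i j, i ≠ j → (∃ n : ℤ, k i j = (n : ℝ)) ∧ k i j ≤ -1)
    (u : Fin 3 → ℝ) (hu : ∀ a, ∃ n : ℤ, u a = n) (i : Fin 3) :
    ∃ N : ℤ, bform3 k u (Pi.single i 1) = (N : ℝ) := by
  have hk : ∀ a b : Fin 3, ∃ n : ℤ, k a b = (n : ℝ) := by
    intro a b
    rcases eq_or_ne a b with rfl | h
    · exact ⟨1, by simp [hdiag a]⟩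
    · exact (hint a b h).1
  choose nu hnu using hu
  choose nk hnk using hk
  refine ⟨∑ a, nu a * nk a i, ?_⟩
  have : bform3 k u (Pi.single i 1) = ∑ a, u a * k a i := by
    unfold bform3
    refine Finset.sum_congr rfl fun a _ => ?_
    rw [Finset.sum_eq_single i]
    · simp
    · intro b _ hb; simp [Pi.single_apply, hb]
    · simp
  rw [this]
  push_cast
  exact Finset.sum_congr rfl fun a _ => by rw [hnu, hnk]

/-- Let `W₍₃₎` act on `V = Fin 3 → ℝ` through a geometric representation determined by
an invariant bilinear form with `(α_i, α_i) = 1` and `(α_i, α_j)` an integer `≤ -1`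
for `i ≠ j`.  If `α = c₁α₁ + c₂α₂ + c₃α₃` is a positive root whose reflection `s_α`
is conjugate to `s₁`, then `c₁ > 0`. -/
theorem first_coefficient_positive_of_conjugate_to_s1
    (k : Matrix (Fin 3) (Fin 3) ℝ)
    (hdiag : ∀ i, k i i = 1)
    (hsymm : ∀ i j, k i j = k j i)
    (hint : ∀ i j, i ≠ j → (∃ n : ℤ, k i j = (n : ℝ)) ∧ k i j ≤ -1)
    (ρ : W3 →* ((Fin 3 → ℝ) ≃ₗ[ℝ] (Fin 3 → ℝ)))
    (hρ : ∀ (i : Fin 3) (v : Fin 3 → ℝ),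
      ρ (cs3.simple i) v = v - (2 * bform3 k v (Pi.single i 1)) • (Pi.single i 1 : Fin 3 → ℝ))
    (c : Fin 3 → ℝ) (hc : ∀ i, 0 ≤ c i)
    (w : W3) (j : Fin 3)
    (hroot : c = ρ w (Pi.single j 1))
    (hconj : IsConj (cs3.simple 0) (w * cs3.simple j * w⁻¹)) :
    0 < c 0 := by
  -- Step 1: `j = 0`, via the sign character `sgn0`.
  have hj : j = 0 := by
    obtain ⟨u, hu⟩ := isConj_iff.mp hconj
    have := congrArg sgn0 hu
    simp only [map_mul, map_inv] at this
    have h1 : sgn0 (cs3.simple 0) = sgn0 (cs3.simple j) := by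
      rw [mul_comm (sgn0 u), mul_assoc, mul_inv_cancel, mul_one,
        mul_comm (sgn0 w), mul_assoc, mul_inv_cancel, mul_one] at this
      exact this
    rw [sgn0_simple, sgn0_simple] at h1
    by_contra hne
    simp [hne] at h1
  subst hj
  -- Step 2: `ρ w` preserves integral vectors modulo 2.
  have key : ∀ w : W3, ∀ v : Fin 3 → ℝ, (∀ a, ∃ n : ℤ, v a = (n : ℝ)) →
      ∃ m : Fin 3 → ℤ, ∀ a, ρ w v a = v a + 2 * (m a : ℝ) := by
    intro w
    induction w using cs3.simple_induction_left with
    | one => exact fun v _ => ⟨0, fun a => by simp⟩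
    | mul_simple_left w' i ih =>
      intro v hv
      obtain ⟨m, hm⟩ := ih v hv
      have hint' : ∀ a, ∃ n : ℤ, (ρ w' v) a = (n : ℝ) := by
        intro a
        obtain ⟨n, hn⟩ := hv a
        exact ⟨n + 2 * m a, by rw [hm a, hn]; push_cast; ring⟩
      obtain ⟨N, hN⟩ := bform3_int k hdiag hint (ρ w' v) hint' i
      refine ⟨fun a => m a - N * (if a = i then 1 else 0), fun a => ?_⟩
      have : ρ (cs3.simple i * w') v = ρ (cs3.simple i) (ρ w' v) := by
        rw [map_mul]; rfl
      rw [this, hρ i (ρ w' v)]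
      simp only [Pi.sub_apply, Pi.smul_apply, smul_eq_mul, hN, hm a, Pi.single_apply]
      rcases eq_or_ne a i with h | h
      · subst h; simp only [if_pos rfl]; push_cast; ring
      · simp only [if_neg h]; push_cast; ring
  obtain ⟨m, hm⟩ := key w (Pi.single 0 1) (fun a => by
    rcases eq_or_ne a 0 with rfl | h
    · exact ⟨1, by simp⟩
    · exact ⟨0, by simp [Pi.single_apply, h]⟩)
  have hc0 : c 0 = 1 + 2 * (m 0 : ℝ) := by
    rw [hroot]; rw [hm 0]; simp
  have h0 : (0 : ℝ) ≤ 1 + 2 * (m 0 : ℝ) := hc0 ▸ hc 0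
  have h0' : (0 : ℤ) ≤ 1 + 2 * m 0 := by exact_mod_cast h0
  have : (0 : ℤ) ≤ m 0 := by omega
  rw [hc0]
  have : (0 : ℝ) ≤ (m 0 : ℝ) := by exact_mod_cast this
  linarith
end
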